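/- Let P(λ) be an n×n matrix polynomial with nonsingular leading coefficient, μ ∉ σ(P), and let δ = s_n(μ)/w(|μ|), where s_n(μ) is the smallest singular value of P(μ). Then (a) there exists Q(λ) = Σ(P_j + Δ_j)λ^j with ‖Δ_j‖ ≤ δ w_j for all j and det Q(μ) = 0; and (b) for every ε < δ, no Q(λ) = Σ(P_j + Δ_j)λ^j with ‖Δ_j‖ ≤ ε w_j for all j satisfies det Q(μ) = 0. -/

import Mathlib

set_option synthInstance.maxHeartbeats 1000000
set_option maxHeartbeats 1000000


open Matrix Finset

/-- The singular values of a complex `N × N` matrix, arranged in decreasing order: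
`svals A 0 ≥ svals A 1 ≥ ... ≥ svals A (N-1)`; that is, `svals A ⟨j-1,_⟩` is the
paper's `s_j(A)`, the nonnegative square roots of the eigenvalues of `Aᴴ * A`. -/
noncomputable def svals {N : ℕ} (A : Matrix (Fin N) (Fin N) ℂ) : Fin N → ℝ :=
  fun i =>
    Real.sqrt ((Matrix.isHermitian_conjTranspose_mul_self A).eigenvalues
      (Tuple.sort ((Matrix.isHermitian_conjTranspose_mul_self A).eigenvalues) i.rev))

/-- The smallest singular value `s_n(A)` of a complex `(N+1) × (N+1)` matrix. -/
noncomputable def sMin {N : ℕ} (A : Matrix (Fin (N + 1)) (Fin (N + 1)) ℂ) : ℝ :=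
  svals A (Fin.last N)

/-- The spectral norm of a matrix: the operator norm induced by the Euclidean vector norm. -/
noncomputable def specNorm {N : ℕ} (A : Matrix (Fin N) (Fin N) ℂ) : ℝ :=
  ‖Matrix.toEuclideanCLM (𝕜 := ℂ) A‖

/-- Euclidean norm of a vector in `ℂ^N`. -/
noncomputable def enorm' {N : ℕ} (x : Fin N → ℂ) : ℝ :=
  ‖(WithLp.equiv 2 (Fin N → ℂ)).symm x‖

/-- Evaluation of the matrix polynomial `P(z) = Σ_{j=0}^m P_j z^j`. -/
noncomputable def polyEval {N m : ℕ} (P : Fin (m + 1) → Matrix (Fin N) (Fin N) ℂ) (z : ℂ) :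
    Matrix (Fin N) (Fin N) ℂ :=
  ∑ j : Fin (m + 1), z ^ (j : ℕ) • P j

/-- Evaluation of the derivative `P'(z) = Σ_{j=1}^m j P_j z^{j-1}`. -/
noncomputable def polyDerivEval {N m : ℕ} (P : Fin (m + 1) → Matrix (Fin N) (Fin N) ℂ)
    (z : ℂ) : Matrix (Fin N) (Fin N) ℂ :=
  ∑ j : Fin (m + 1), (((j : ℕ) : ℂ) * z ^ ((j : ℕ) - 1)) • P j

/-- Evaluation of the weight polynomial `w(x) = Σ_{j=0}^m w_j x^j`. -/
noncomputable def wEval {m : ℕ} (w : Fin (m + 1) → ℝ) (x : ℝ) : ℝ :=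
  ∑ j : Fin (m + 1), w j * x ^ (j : ℕ)

namespace Stmt12Aux

noncomputable def toE {N : ℕ} (x : Fin N → ℂ) : EuclideanSpace ℂ (Fin N) :=
  (WithLp.equiv 2 (Fin N → ℂ)).symm x

lemma clm_apply {N : ℕ} (A : Matrix (Fin N) (Fin N) ℂ) (x : Fin N → ℂ) :
    Matrix.toEuclideanCLM (𝕜 := ℂ) A (toE x) = toE (A *ᵥ x) := by
  rfl

lemma toE_smul {N : ℕ} (c : ℂ) (x : Fin N → ℂ) : toE (c • x) = c • toE x := rfl

lemma toE_inj {N : ℕ} : Function.Injective (toE (N := N)) :=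
  (WithLp.equiv 2 (Fin N → ℂ)).symm.injective

lemma toE_zero {N : ℕ} : toE (N := N) 0 = 0 := rfl

lemma specNorm_nonneg {N : ℕ} (A : Matrix (Fin N) (Fin N) ℂ) : 0 ≤ specNorm A :=
  norm_nonneg _

/-- `‖A x‖² = Σ_i λ_i |⟪B i, x⟫|²` where `λ, B` are the eigenvalues/vectors of `Aᴴ A`. -/
lemma clm_norm_sq_eq {N : ℕ} (A : Matrix (Fin N) (Fin N) ℂ) (x : EuclideanSpace ℂ (Fin N)) :
    ‖Matrix.toEuclideanCLM (𝕜 := ℂ) A x‖ ^ 2 =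
      ∑ i, (Matrix.isHermitian_conjTranspose_mul_self A).eigenvalues i *
        ‖(inner ℂ ((Matrix.isHermitian_conjTranspose_mul_self A).eigenvectorBasis i) x : ℂ)‖ ^ 2 := by
  set hH := Matrix.isHermitian_conjTranspose_mul_self A with hHdef
  set B := hH.eigenvectorBasis with hBdef
  set L := Matrix.toEuclideanCLM (𝕜 := ℂ) A with hLdef
  set T := Matrix.toEuclideanCLM (𝕜 := ℂ) (Aᴴ * A) with hTdef
  have hTB : ∀ i, T (B i) = ((hH.eigenvalues i : ℝ) : ℂ) • B i := by
    intro i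
    apply (WithLp.equiv 2 (Fin N → ℂ)).injective
    rw [hTdef]
    have h := hH.mulVec_eigenvectorBasis i
    rw [← hBdef] at h
    rw [RCLike.real_smul_eq_coe_smul (K := ℂ)] at h
    exact h
  have h2 : (inner ℂ (L x) (L x) : ℂ) = inner ℂ x (T x) := by
    have hT : T = star L * L := by
      rw [hTdef, hLdef, ← Matrix.star_eq_conjTranspose, _root_.map_mul, map_star]
    rw [hT, ContinuousLinearMap.mul_apply, ContinuousLinearMap.star_eq_adjoint,
      ContinuousLinearMap.adjoint_inner_right]
  have h4 : (inner ℂ x (T x) : ℂ) =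
      ∑ i, ((hH.eigenvalues i * ‖(inner ℂ (B i) x : ℂ)‖ ^ 2 : ℝ) : ℂ) := by
    rw [← B.sum_inner_mul_inner x (T x)]
    refine Finset.sum_congr rfl fun i _ => ?_
    have hsym := Matrix.isHermitian_iff_isSymmetric.mp hH
    have hBiT : (inner ℂ (B i) (T x) : ℂ) = ((hH.eigenvalues i : ℝ) : ℂ) * inner ℂ (B i) x := by
      have h5 : (inner ℂ (T (B i)) x : ℂ) = inner ℂ (B i) (T x) := hsym (B i) x
      rw [← h5, hTB i, inner_smul_left]
      simp [Complex.conj_ofReal]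
    have hconj : (inner ℂ x (B i) : ℂ) = (starRingEnd ℂ) (inner ℂ (B i) x) :=
      (inner_conj_symm x (B i)).symm
    set z := (inner ℂ (B i) x : ℂ) with hz
    have hzz : (starRingEnd ℂ) z * z = ((‖z‖ ^ 2 : ℝ) : ℂ) := by
      rw [mul_comm, Complex.mul_conj, Complex.normSq_eq_norm_sq]
    calc (inner ℂ x (B i) : ℂ) * inner ℂ (B i) (T x)
        = (starRingEnd ℂ) z * (((hH.eigenvalues i : ℝ) : ℂ) * z) := by rw [hBiT, hconj]
      _ = ((hH.eigenvalues i : ℝ) : ℂ) * ((starRingEnd ℂ) z * z) := by ring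
      _ = ((hH.eigenvalues i * ‖z‖ ^ 2 : ℝ) : ℂ) := by rw [hzz]; push_cast; try ring
  have h1 : ‖L x‖ ^ 2 = RCLike.re (inner ℂ (L x) (L x) : ℂ) := (inner_self_eq_norm_sq _).symm
  rw [h1, h2, h4, ← Complex.ofReal_sum, RCLike.re_to_complex, Complex.ofReal_re]

lemma parseval {N : ℕ} (B : OrthonormalBasis (Fin N) ℂ (EuclideanSpace ℂ (Fin N)))
    (x : EuclideanSpace ℂ (Fin N)) :
    ∑ i, ‖(inner ℂ (B i) x : ℂ)‖ ^ 2 = ‖x‖ ^ 2 := by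
  have h := B.repr.norm_map x
  rw [← h, EuclideanSpace.norm_eq, Real.sq_sqrt (by positivity)]
  exact Finset.sum_congr rfl fun i _ => by rw [B.repr_apply_apply]

lemma smin_eq {N : ℕ} (A : Matrix (Fin (N + 1)) (Fin (N + 1)) ℂ) :
    sMin A = Real.sqrt ((Matrix.isHermitian_conjTranspose_mul_self A).eigenvalues
      (Tuple.sort ((Matrix.isHermitian_conjTranspose_mul_self A).eigenvalues) 0)) := by
  simp only [sMin, svals, Fin.rev_last]

lemma smin_nonneg {N : ℕ} (A : Matrix (Fin (N + 1)) (Fin (N + 1)) ℂ) : 0 ≤ sMin A := by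
  rw [smin_eq]; exact Real.sqrt_nonneg _

lemma smin_sq {N : ℕ} (A : Matrix (Fin (N + 1)) (Fin (N + 1)) ℂ) :
    sMin A ^ 2 = (Matrix.isHermitian_conjTranspose_mul_self A).eigenvalues
      (Tuple.sort ((Matrix.isHermitian_conjTranspose_mul_self A).eigenvalues) 0) := by
  rw [smin_eq]
  exact Real.sq_sqrt (Matrix.eigenvalues_conjTranspose_mul_self_nonneg A _)

lemma eig_min_le {N : ℕ} (A : Matrix (Fin (N + 1)) (Fin (N + 1)) ℂ) (i : Fin (N + 1)) :
    (Matrix.isHermitian_conjTranspose_mul_self A).eigenvalues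
      (Tuple.sort ((Matrix.isHermitian_conjTranspose_mul_self A).eigenvalues) 0) ≤
    (Matrix.isHermitian_conjTranspose_mul_self A).eigenvalues i := by
  set f := (Matrix.isHermitian_conjTranspose_mul_self A).eigenvalues
  have hmono := Tuple.monotone_sort f
  have h := hmono (Fin.zero_le ((Tuple.sort f).symm i))
  simpa using h

/-- Lower bound: `s_min(A) ‖x‖ ≤ ‖A x‖`. -/
lemma smin_mul_norm_le {N : ℕ} (A : Matrix (Fin (N + 1)) (Fin (N + 1)) ℂ)
    (x : EuclideanSpace ℂ (Fin (N + 1))) :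
    sMin A * ‖x‖ ≤ ‖Matrix.toEuclideanCLM (𝕜 := ℂ) A x‖ := by
  have hs := smin_nonneg A
  have hsq : (sMin A * ‖x‖) ^ 2 ≤ ‖Matrix.toEuclideanCLM (𝕜 := ℂ) A x‖ ^ 2 := by
    rw [mul_pow, smin_sq, clm_norm_sq_eq]
    calc (Matrix.isHermitian_conjTranspose_mul_self A).eigenvalues
          (Tuple.sort ((Matrix.isHermitian_conjTranspose_mul_self A).eigenvalues) 0) * ‖x‖ ^ 2
        = ∑ i, (Matrix.isHermitian_conjTranspose_mul_self A).eigenvalues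
            (Tuple.sort ((Matrix.isHermitian_conjTranspose_mul_self A).eigenvalues) 0) *
            ‖(inner ℂ ((Matrix.isHermitian_conjTranspose_mul_self A).eigenvectorBasis i) x : ℂ)‖ ^ 2 := by
          rw [← Finset.mul_sum, parseval]
      _ ≤ _ := by
          refine Finset.sum_le_sum fun i _ => ?_
          exact mul_le_mul_of_nonneg_right (eig_min_le A i) (by positivity)
  calc sMin A * ‖x‖ = Real.sqrt ((sMin A * ‖x‖) ^ 2) :=
        (Real.sqrt_sq (mul_nonneg hs (norm_nonneg x))).symm
    _ ≤ Real.sqrt (‖Matrix.toEuclideanCLM (𝕜 := ℂ) A x‖ ^ 2) := Real.sqrt_le_sqrt hsq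
    _ = ‖Matrix.toEuclideanCLM (𝕜 := ℂ) A x‖ := Real.sqrt_sq (norm_nonneg _)

lemma clm_norm_basis {N : ℕ} (A : Matrix (Fin N) (Fin N) ℂ) (i : Fin N) :
    ‖Matrix.toEuclideanCLM (𝕜 := ℂ) A
        ((Matrix.isHermitian_conjTranspose_mul_self A).eigenvectorBasis i)‖ ^ 2 =
      (Matrix.isHermitian_conjTranspose_mul_self A).eigenvalues i := by
  rw [clm_norm_sq_eq, Finset.sum_eq_single i]
  · have h1 : (inner ℂ ((Matrix.isHermitian_conjTranspose_mul_self A).eigenvectorBasis i)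
        ((Matrix.isHermitian_conjTranspose_mul_self A).eigenvectorBasis i) : ℂ) = 1 := by
      rw [inner_self_eq_norm_sq_to_K,
        (Matrix.isHermitian_conjTranspose_mul_self A).eigenvectorBasis.orthonormal.1 i]
      norm_num
    rw [h1]
    norm_num
  · intro b _ hbne
    rw [(Matrix.isHermitian_conjTranspose_mul_self A).eigenvectorBasis.orthonormal.2 hbne]
    norm_num
  · intro h; exact absurd (Finset.mem_univ i) h

/-- There is a unit vector achieving `s_min`. -/
lemma exists_min_vec {N : ℕ} (A : Matrix (Fin (N + 1)) (Fin (N + 1)) ℂ) :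
    ∃ v : EuclideanSpace ℂ (Fin (N + 1)), ‖v‖ = 1 ∧
      ‖Matrix.toEuclideanCLM (𝕜 := ℂ) A v‖ = sMin A := by
  refine ⟨(Matrix.isHermitian_conjTranspose_mul_self A).eigenvectorBasis
      (Tuple.sort ((Matrix.isHermitian_conjTranspose_mul_self A).eigenvalues) 0),
    (Matrix.isHermitian_conjTranspose_mul_self A).eigenvectorBasis.orthonormal.1 _, ?_⟩
  have hsq := clm_norm_basis A
    (Tuple.sort ((Matrix.isHermitian_conjTranspose_mul_self A).eigenvalues) 0)
  have h := congrArg Real.sqrt hsq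
  rw [Real.sqrt_sq (norm_nonneg _)] at h
  rw [h, smin_eq]

/-- If `A` is invertible then `s_min(A) > 0`. -/
lemma smin_pos {N : ℕ} (A : Matrix (Fin (N + 1)) (Fin (N + 1)) ℂ) (hA : A.det ≠ 0) :
    0 < sMin A := by
  rcases lt_or_eq_of_le (smin_nonneg A) with h | h
  · exact h
  · exfalso
    obtain ⟨v, hv1, hvA⟩ := exists_min_vec A
    set v' := (WithLp.equiv 2 (Fin (N + 1) → ℂ)) v with hv'def
    have htoEv : toE v' = v := (WithLp.equiv 2 (Fin (N + 1) → ℂ)).symm_apply_apply v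
    have hv'0 : v' ≠ 0 := by
      intro h0
      rw [h0, toE_zero] at htoEv
      rw [← htoEv] at hv1
      simp at hv1
    apply hA
    rw [← Matrix.exists_mulVec_eq_zero_iff]
    refine ⟨v', hv'0, ?_⟩
    have hLv : Matrix.toEuclideanCLM (𝕜 := ℂ) A v = 0 := by
      rw [← norm_eq_zero, hvA, ← h]
    have hc := clm_apply A v'
    rw [htoEv, hLv] at hc
    exact toE_inj (by rw [← hc, toE_zero])

lemma specNorm_smul_le {N : ℕ} (c : ℂ) (M : Matrix (Fin N) (Fin N) ℂ) :
    specNorm (c • M) ≤ ‖c‖ * specNorm M := by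
  rw [specNorm, specNorm]
  refine ContinuousLinearMap.opNorm_le_bound _
    (mul_nonneg (norm_nonneg c) (norm_nonneg _)) fun x => ?_
  have hx : toE ((WithLp.equiv 2 (Fin N → ℂ)) x) = x :=
    (WithLp.equiv 2 (Fin N → ℂ)).symm_apply_apply x
  have h1 : Matrix.toEuclideanCLM (𝕜 := ℂ) (c • M) x =
      c • Matrix.toEuclideanCLM (𝕜 := ℂ) M x := by
    rw [← hx, clm_apply, clm_apply, Matrix.smul_mulVec, toE_smul]
  rw [h1, norm_smul]
  calc ‖c‖ * ‖Matrix.toEuclideanCLM (𝕜 := ℂ) M x‖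
      ≤ ‖c‖ * (‖Matrix.toEuclideanCLM (𝕜 := ℂ) M‖ * ‖x‖) :=
        mul_le_mul_of_nonneg_left (ContinuousLinearMap.le_opNorm _ _) (norm_nonneg c)
    _ = ‖c‖ * ‖Matrix.toEuclideanCLM (𝕜 := ℂ) M‖ * ‖x‖ := by ring

end Stmt12Aux

open Stmt12Aux

/-- For `μ ∉ σ(P)` and `δ = s_n(P(μ))/w(|μ|)`: (a) some perturbation of
size `δ` has `μ` as an eigenvalue; (b) no perturbation of size `ε < δ` does. -/
theorem stmt12 {n m : ℕ} (P : Fin (m + 1) → Matrix (Fin (n + 1)) (Fin (n + 1)) ℂ)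
    (hPm : (P (Fin.last m)).det ≠ 0)
    (w : Fin (m + 1) → ℝ) (hw : ∀ j, 0 ≤ w j) (hw0 : 0 < w 0)
    (μ : ℂ) (hμ : (polyEval P μ).det ≠ 0) :
    (∃ Δ : Fin (m + 1) → Matrix (Fin (n + 1)) (Fin (n + 1)) ℂ,
        (∀ j, specNorm (Δ j) ≤
          (sMin (polyEval P μ) / wEval w (‖μ‖)) * w j) ∧
          (∑ j : Fin (m + 1), μ ^ (j : ℕ) • (P j + Δ j)).det = 0) ∧
      ∀ ε : ℝ, ε < sMin (polyEval P μ) / wEval w (‖μ‖) →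
        ∀ Δ : Fin (m + 1) → Matrix (Fin (n + 1)) (Fin (n + 1)) ℂ,
          (∀ j, specNorm (Δ j) ≤ ε * w j) →
            (∑ j : Fin (m + 1), μ ^ (j : ℕ) • (P j + Δ j)).det ≠ 0 := by
  classical
  set A := polyEval P μ with hAdef
  set s := sMin A with hsdef
  set W := wEval w (‖μ‖) with hWdef
  have hWpos : 0 < W := by
    rw [hWdef, wEval]
    refine Finset.sum_pos' (fun j _ => mul_nonneg (hw j) (pow_nonneg (norm_nonneg μ) _)) ⟨0, Finset.mem_univ _, ?_⟩
    simp [hw0]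
  have hspos : 0 < s := smin_pos A hμ
  have hWne : ((W : ℝ) : ℂ) ≠ 0 := by
    simp only [ne_eq, Complex.ofReal_eq_zero]
    exact hWpos.ne'
  have hsplit : ∀ Δ : Fin (m + 1) → Matrix (Fin (n + 1)) (Fin (n + 1)) ℂ,
      (∑ j : Fin (m + 1), μ ^ (j : ℕ) • (P j + Δ j)) =
        A + ∑ j : Fin (m + 1), μ ^ (j : ℕ) • Δ j := by
    intro Δ
    rw [hAdef, polyEval, ← Finset.sum_add_distrib]
    exact Finset.sum_congr rfl fun j _ => smul_add _ _ _
  constructor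
  · -- part (a)
    obtain ⟨v, hv1, hvA⟩ := exists_min_vec A
    set v' := (WithLp.equiv 2 (Fin (n + 1) → ℂ)) v with hv'def
    have htoEv : toE v' = v := (WithLp.equiv 2 (Fin (n + 1) → ℂ)).symm_apply_apply v
    set u' : Fin (n + 1) → ℂ := ((s : ℂ))⁻¹ • (A *ᵥ v') with hu'def
    have hAv'norm : ‖toE (A *ᵥ v')‖ = s := by
      rw [← clm_apply, htoEv, hvA]
    have hsne : (s : ℂ) ≠ 0 := by
      simp only [ne_eq, Complex.ofReal_eq_zero]
      exact hspos.ne'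
    have hAv : A *ᵥ v' = (s : ℂ) • u' := by
      rw [hu'def, smul_smul, mul_inv_cancel₀ hsne, one_smul]
    have hu'norm : ‖toE u'‖ = 1 := by
      rw [hu'def, toE_smul, norm_smul, hAv'norm, norm_inv, Complex.norm_real,
        Real.norm_eq_abs, abs_of_pos hspos]
      field_simp
    set E : Matrix (Fin (n + 1)) (Fin (n + 1)) ℂ := Matrix.vecMulVec u' (star v') with hEdef
    have hEmul : ∀ x : Fin (n + 1) → ℂ, E *ᵥ x = (star v' ⬝ᵥ x) • u' := by
      intro x
      funext i
      simp only [hEdef, Matrix.mulVec, dotProduct, Matrix.vecMulVec_apply,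
        Pi.smul_apply, smul_eq_mul]
      rw [Finset.sum_mul]
      exact Finset.sum_congr rfl fun j _ => by ring
    have hvv : star v' ⬝ᵥ v' = 1 := by
      have h := EuclideanSpace.inner_eq_star_dotProduct v v
      rw [inner_self_eq_norm_sq_to_K, hv1] at h
      rw [dotProduct_comm]
      have h' : v.ofLp ⬝ᵥ star v.ofLp = 1 := by simpa using h.symm
      exact h'
    have hspecE : specNorm E ≤ 1 := by
      rw [specNorm]
      refine ContinuousLinearMap.opNorm_le_bound _ zero_le_one fun x => ?_
      rw [one_mul]
      have htoEx : toE ((WithLp.equiv 2 (Fin (n + 1) → ℂ)) x) = x :=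
        (WithLp.equiv 2 (Fin (n + 1) → ℂ)).symm_apply_apply x
      rw [← htoEx, clm_apply, hEmul, toE_smul, norm_smul, hu'norm, mul_one]
      have hinner : (inner ℂ v x : ℂ) = star v' ⬝ᵥ (WithLp.equiv 2 (Fin (n + 1) → ℂ)) x := by
        rw [EuclideanSpace.inner_eq_star_dotProduct]; exact dotProduct_comm _ _
      rw [← hinner, htoEx]
      calc ‖(inner ℂ v x : ℂ)‖ ≤ ‖v‖ * ‖x‖ := norm_inner_le_norm v x
        _ = ‖x‖ := by rw [hv1, one_mul]
    set φ : ℂ := (starRingEnd ℂ) μ / ((‖μ‖ : ℝ) : ℂ) with hφdef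
    have hφμ : φ * μ = ((‖μ‖ : ℝ) : ℂ) := by
      by_cases h : μ = 0
      · simp [hφdef, h]
      · have habs : ((‖μ‖ : ℝ) : ℂ) ≠ 0 := by
          simp only [ne_eq, Complex.ofReal_eq_zero]
          exact norm_ne_zero_iff.mpr h
        rw [hφdef, div_mul_eq_mul_div, eq_comm, eq_div_iff habs,
          mul_comm ((starRingEnd ℂ) μ) μ, Complex.mul_conj, Complex.normSq_eq_norm_sq]
        push_cast
        ring
    have hφ1 : ‖φ‖ ≤ 1 := by
      by_cases h : μ = 0
      · simp [hφdef, h]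
      · rw [hφdef, norm_div, Complex.norm_real, Real.norm_eq_abs,
          abs_of_nonneg (norm_nonneg μ)]
        have hconj : ‖(starRingEnd ℂ) μ‖ = ‖μ‖ := by
          rw [Complex.norm_conj]
        rw [hconj, div_self (norm_ne_zero_iff.mpr h)]
    set Δ : Fin (m + 1) → Matrix (Fin (n + 1)) (Fin (n + 1)) ℂ :=
      fun j => ((-(s : ℂ) / ((W : ℝ) : ℂ)) * ((w j : ℝ) : ℂ) * φ ^ (j : ℕ)) • E with hΔdef
    refine ⟨Δ, fun j => ?_, ?_⟩
    · rw [hΔdef]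
      refine le_trans (specNorm_smul_le _ _) ?_
      have hc : ‖(-(s : ℂ) / ((W : ℝ) : ℂ)) * ((w j : ℝ) : ℂ) * φ ^ (j : ℕ)‖ ≤
          s / W * w j := by
        rw [norm_mul, norm_mul, norm_div, norm_neg, norm_pow, Complex.norm_real,
          Complex.norm_real, Complex.norm_real, Real.norm_eq_abs, Real.norm_eq_abs,
          Real.norm_eq_abs, abs_of_pos hspos, abs_of_pos hWpos, abs_of_nonneg (hw j)]
        have h2 : ‖φ‖ ^ (j : ℕ) ≤ 1 := pow_le_one₀ (norm_nonneg _) hφ1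
        calc s / W * w j * ‖φ‖ ^ (j : ℕ) ≤ s / W * w j * 1 :=
              mul_le_mul_of_nonneg_left h2 (mul_nonneg (div_nonneg hspos.le hWpos.le) (hw j))
          _ = s / W * w j := mul_one _
      calc ‖(-(s : ℂ) / ((W : ℝ) : ℂ)) * ((w j : ℝ) : ℂ) * φ ^ (j : ℕ)‖ * specNorm E
          ≤ ‖(-(s : ℂ) / ((W : ℝ) : ℂ)) * ((w j : ℝ) : ℂ) * φ ^ (j : ℕ)‖ * 1 :=
            mul_le_mul_of_nonneg_left hspecE (norm_nonneg _)
        _ = ‖(-(s : ℂ) / ((W : ℝ) : ℂ)) * ((w j : ℝ) : ℂ) * φ ^ (j : ℕ)‖ := mul_one _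
        _ ≤ s / W * w j := hc
    · rw [hsplit]
      have hsum2 : ∑ j : Fin (m + 1),
          ((-(s : ℂ) / ((W : ℝ) : ℂ)) * (((w j : ℝ) : ℂ) * ((‖μ‖ : ℝ) : ℂ) ^ (j : ℕ)))
          = -(s : ℂ) := by
        rw [← Finset.mul_sum]
        have hWc : ∑ j : Fin (m + 1), ((w j : ℝ) : ℂ) * ((‖μ‖ : ℝ) : ℂ) ^ (j : ℕ)
            = ((W : ℝ) : ℂ) := by
          rw [hWdef, wEval]
          push_cast
          rfl
        rw [hWc, div_mul_cancel₀ _ hWne]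
      have hsum : (∑ j : Fin (m + 1), μ ^ (j : ℕ) • Δ j) = (-(s : ℂ)) • E := by
        calc ∑ j : Fin (m + 1), μ ^ (j : ℕ) • Δ j
            = ∑ j : Fin (m + 1), ((-(s : ℂ) / ((W : ℝ) : ℂ)) *
                (((w j : ℝ) : ℂ) * ((‖μ‖ : ℝ) : ℂ) ^ (j : ℕ))) • E := by
              refine Finset.sum_congr rfl fun j _ => ?_
              rw [hΔdef, smul_smul]
              congr 1
              rw [← hφμ, mul_pow]
              ring
          _ = (-(s : ℂ)) • E := by rw [← Finset.sum_smul, hsum2]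
      rw [hsum]
      rw [← Matrix.exists_mulVec_eq_zero_iff]
      have hv'0 : v' ≠ 0 := by
        intro h0
        rw [h0, toE_zero] at htoEv
        rw [← htoEv] at hv1
        simp at hv1
      refine ⟨v', hv'0, ?_⟩
      rw [Matrix.add_mulVec, Matrix.smul_mulVec, hEmul, hvv, one_smul, hAv,
        ← add_smul]
      simp
  · -- part (b)
    intro ε hε Δ hΔ
    rw [hsplit]
    set M := ∑ j : Fin (m + 1), μ ^ (j : ℕ) • Δ j with hMdef
    have hMnorm : specNorm M ≤ ε * W := by
      rw [hMdef, specNorm, _root_.map_sum]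
      refine le_trans (norm_sum_le _ _) ?_
      have hterm : ∀ j : Fin (m + 1),
          ‖Matrix.toEuclideanCLM (𝕜 := ℂ) (μ ^ (j : ℕ) • Δ j)‖ ≤
            ε * (w j * ‖μ‖ ^ (j : ℕ)) := by
        intro j
        have h0 : specNorm (μ ^ (j : ℕ) • Δ j) ≤
            ‖μ‖ ^ (j : ℕ) * specNorm (Δ j) := by
          have h := specNorm_smul_le (μ ^ (j : ℕ)) (Δ j)
          rwa [norm_pow] at h
        calc ‖Matrix.toEuclideanCLM (𝕜 := ℂ) (μ ^ (j : ℕ) • Δ j)‖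
            = specNorm (μ ^ (j : ℕ) • Δ j) := rfl
          _ ≤ ‖μ‖ ^ (j : ℕ) * specNorm (Δ j) := h0
          _ ≤ ‖μ‖ ^ (j : ℕ) * (ε * w j) :=
              mul_le_mul_of_nonneg_left (hΔ j) (by positivity)
          _ = ε * (w j * ‖μ‖ ^ (j : ℕ)) := by ring
      refine le_trans (Finset.sum_le_sum fun j _ => hterm j) ?_
      rw [← Finset.mul_sum, hWdef, wEval]
    have hMs : specNorm M < s := by
      refine lt_of_le_of_lt hMnorm ?_
      have h := mul_lt_mul_of_pos_right hε hWpos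
      rwa [div_mul_cancel₀ _ hWpos.ne'] at h
    intro hdet
    obtain ⟨x, hxne, hx0⟩ := Matrix.exists_mulVec_eq_zero_iff.mpr hdet
    have hxE : toE x ≠ 0 := fun h => hxne (toE_inj (by rw [h, toE_zero]))
    have hxn : 0 < ‖toE x‖ := norm_pos_iff.mpr hxE
    have h1 : s * ‖toE x‖ ≤ ‖Matrix.toEuclideanCLM (𝕜 := ℂ) A (toE x)‖ :=
      smin_mul_norm_le A _
    have h2 : Matrix.toEuclideanCLM (𝕜 := ℂ) A (toE x) =
        - Matrix.toEuclideanCLM (𝕜 := ℂ) M (toE x) := by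
      have hAM : Matrix.toEuclideanCLM (𝕜 := ℂ) (A + M) (toE x) = 0 := by
        rw [clm_apply, hx0, toE_zero]
      rw [_root_.map_add, ContinuousLinearMap.add_apply] at hAM
      exact eq_neg_of_add_eq_zero_left hAM
    have h3 : ‖Matrix.toEuclideanCLM (𝕜 := ℂ) A (toE x)‖ ≤ specNorm M * ‖toE x‖ := by
      rw [h2, norm_neg]
      exact ContinuousLinearMap.le_opNorm _ _
    have hcontr : s * ‖toE x‖ < s * ‖toE x‖ :=
      lt_of_le_of_lt (h1.trans h3) (mul_lt_mul_of_pos_right hMs hxn)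
    exact lt_irrefl _ hcontr
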